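/- Let Ω ⊂ ℝ^d be a bounded Lipschitz domain and R a function on Ω satisfying, for some constants C and exponent σ ∈ (0,1): |R(x)| ≤ C (ε/δ(x))^{1-σ} when δ(x) ≥ ε, and |R(x)| ≤ C(1 + |log δ(x)|) when δ(x) ≤ ε, where δ(x) = dist(x, ∂Ω) and 0 < ε < 1. Then for every 1 < q < ∞, ‖R‖_{L^q(Ω)} ≤ C' ε^{1/q}(1 + |log ε|), with C' depending on q, σ, C, and Ω. -/

import Mathlib

open MeasureTheory
open scoped ENNReal NNReal

-- covering lemmas
lemma cover_inner {ε y : ℝ} (hε : 0 < ε) (hy : ε ≤ y) :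
    ∃ k : ℕ, ε * 2 ^ k ≤ y ∧ y < ε * 2 ^ (k + 1) := by
  classical
  have hex : ∃ n : ℕ, y < ε * 2 ^ n := by
    obtain ⟨n, hn⟩ := pow_unbounded_of_one_lt (y / ε) (one_lt_two (α := ℝ))
    exact ⟨n, by rw [div_lt_iff₀ hε] at hn; linarith [hn]⟩
  have hn := Nat.find_spec hex
  have hn0 : Nat.find hex ≠ 0 := by
    intro h
    rw [h] at hn
    simp only [pow_zero, mul_one] at hn
    linarith
  obtain ⟨k, hk⟩ := Nat.exists_eq_succ_of_ne_zero hn0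
  refine ⟨k, ?_, ?_⟩
  · have := Nat.find_min hex (m := k) (by omega)
    push_neg at this
    exact this
  · rw [hk] at hn; exact hn

lemma cover_outer {ε y : ℝ} (hε : 0 < ε) (h0 : 0 < y) (hy : y < ε) :
    ∃ k : ℕ, ε * ((2:ℝ) ^ (k + 1))⁻¹ ≤ y ∧ y < ε * ((2:ℝ) ^ k)⁻¹ := by
  classical
  have hex : ∃ n : ℕ, ε * ((2:ℝ) ^ n)⁻¹ ≤ y := by
    obtain ⟨n, hn⟩ := pow_unbounded_of_one_lt (ε / y) (one_lt_two (α := ℝ))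
    refine ⟨n, ?_⟩
    rw [div_lt_iff₀ h0] at hn
    rw [mul_inv_le_iff₀ (by positivity)]
    linarith
  have hn := Nat.find_spec hex
  have hn0 : Nat.find hex ≠ 0 := by
    intro h
    rw [h] at hn
    simp only [pow_zero, inv_one, mul_one] at hn
    linarith
  obtain ⟨k, hk⟩ := Nat.exists_eq_succ_of_ne_zero hn0
  refine ⟨k, ?_, ?_⟩
  · rw [← Nat.succ_eq_add_one, ← hk]; exact hn
  · have := Nat.find_min hex (m := k) (by omega)
    push_neg at this
    exact this
open scoped ENNReal NNReal

lemma geo_sum (A r : ℝ) (hA : 0 ≤ A) (hr0 : 0 ≤ r) (hr1 : r < 1) :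
    (∑' k : ℕ, ENNReal.ofReal A * ENNReal.ofReal r ^ k) ≤ ENNReal.ofReal (A / (1 - r)) := by
  rw [ENNReal.tsum_mul_left, ENNReal.tsum_geometric]
  have h1 : (1 : ℝ≥0∞) - ENNReal.ofReal r = ENNReal.ofReal (1 - r) := by
    rw [ENNReal.ofReal_sub 1 hr0, ENNReal.ofReal_one]
  rw [h1, ← ENNReal.ofReal_inv_of_pos (by linarith), ← ENNReal.ofReal_mul hA, div_eq_mul_inv]

lemma layer_est {X : Type*} [MeasurableSpace X] (ν : Measure X) (δ : X → ℝ)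
    (C₁ : ℝ) (hb : ∀ t : ℝ, 0 < t → ν {x | δ x < t} ≤ ENNReal.ofReal (C₁ * t))
    (u v : ℕ → ℝ) (hv : ∀ k, 0 < v k)
    (β : ℝ) (S : Set X)
    (hcov : S ⊆ ⋃ k, {x | u k ≤ δ x ∧ δ x < v k})
    (A r : ℝ) (hA : 0 ≤ A) (hr0 : 0 ≤ r) (hr1 : r < 1)
    (a : ℕ → ℝ) (ha0 : ∀ k, 0 ≤ a k)
    (hval : ∀ k x, u k ≤ δ x → δ x < v k → (δ x) ^ (-β) ≤ a k)
    (hprod : ∀ k, a k * (C₁ * v k) ≤ A * r ^ k) :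
    ∫⁻ x in S, ENNReal.ofReal ((δ x) ^ (-β)) ∂ν ≤ ENNReal.ofReal (A / (1 - r)) := by
  calc ∫⁻ x in S, ENNReal.ofReal ((δ x) ^ (-β)) ∂ν
      ≤ ∫⁻ x in ⋃ k, {x | u k ≤ δ x ∧ δ x < v k}, ENNReal.ofReal ((δ x) ^ (-β)) ∂ν :=
        lintegral_mono_set hcov
    _ ≤ ∑' k : ℕ, ∫⁻ x in {x | u k ≤ δ x ∧ δ x < v k}, ENNReal.ofReal ((δ x) ^ (-β)) ∂ν :=
        lintegral_iUnion_le _ _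
    _ ≤ ∑' k : ℕ, ENNReal.ofReal A * ENNReal.ofReal r ^ k := by
        refine ENNReal.tsum_le_tsum fun k => ?_
        have step1 : ∫⁻ x in {x | u k ≤ δ x ∧ δ x < v k}, ENNReal.ofReal ((δ x) ^ (-β)) ∂ν
            ≤ ∫⁻ _ in {x | u k ≤ δ x ∧ δ x < v k}, ENNReal.ofReal (a k) ∂ν := by
          refine setLIntegral_mono measurable_const fun x hx => ?_
          exact ENNReal.ofReal_le_ofReal (hval k x hx.1 hx.2)
        refine step1.trans ?_
        rw [setLIntegral_const]
        have hmeas : ν {x | u k ≤ δ x ∧ δ x < v k} ≤ ENNReal.ofReal (C₁ * v k) := by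
          refine (measure_mono fun x hx => hx.2).trans (hb _ (hv k))
        calc ENNReal.ofReal (a k) * ν {x | u k ≤ δ x ∧ δ x < v k}
            ≤ ENNReal.ofReal (a k) * ENNReal.ofReal (C₁ * v k) := by
              exact mul_le_mul_right hmeas _
          _ = ENNReal.ofReal (a k * (C₁ * v k)) := (ENNReal.ofReal_mul (ha0 k)).symm
          _ ≤ ENNReal.ofReal (A * r ^ k) := ENNReal.ofReal_le_ofReal (hprod k)
          _ = ENNReal.ofReal A * ENNReal.ofReal r ^ k := by
              rw [ENNReal.ofReal_mul hA, ENNReal.ofReal_pow hr0]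
    _ ≤ ENNReal.ofReal (A / (1 - r)) := geo_sum A r hA hr0 hr1

lemma pow_rpow_comm (k : ℕ) (c : ℝ) : ((2:ℝ) ^ k) ^ c = ((2:ℝ) ^ c) ^ k := by
  rw [← Real.rpow_natCast 2 k, ← Real.rpow_mul (by norm_num), mul_comm,
    Real.rpow_mul (by norm_num), Real.rpow_natCast]

lemma hprod_inner {ε C₁ α : ℝ} (hε : 0 < ε) (k : ℕ) :
    (ε * 2 ^ k) ^ (-α) * (C₁ * (ε * 2 ^ (k + 1))) =
      2 * C₁ * ε ^ (1 - α) * ((2:ℝ) ^ (1 - α)) ^ k := by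
  have h2k : (0:ℝ) < 2 ^ k := by positivity
  rw [Real.mul_rpow hε.le h2k.le, pow_rpow_comm, pow_succ]
  have hε1 : ε ^ (1 - α) = ε * ε ^ (-α) := by
    rw [show (1:ℝ) - α = 1 + (-α) by ring, Real.rpow_add hε, Real.rpow_one]
  have h21 : (2:ℝ) ^ (1 - α) = 2 * 2 ^ (-α) := by
    rw [show (1:ℝ) - α = 1 + (-α) by ring, Real.rpow_add two_pos, Real.rpow_one]
  rw [hε1, h21, mul_pow]
  ring

lemma hprod_outer {ε C₁ : ℝ} (hε : 0 < ε) (k : ℕ) :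
    (ε * ((2:ℝ) ^ (k + 1))⁻¹) ^ (-(2⁻¹:ℝ)) * (C₁ * (ε * ((2:ℝ) ^ k)⁻¹)) =
      (2:ℝ) ^ (2⁻¹:ℝ) * C₁ * ε ^ (2⁻¹:ℝ) * ((2:ℝ) ^ (-(2⁻¹:ℝ))) ^ k := by
  have h2k : (0:ℝ) < 2 ^ (k+1) := by positivity
  have hP : ((2:ℝ) ^ (2⁻¹:ℝ)) ^ k * ((2:ℝ) ^ (2⁻¹:ℝ)) ^ k = 2 ^ k := by
    rw [← mul_pow, ← Real.rpow_add two_pos]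
    norm_num
  have hPpos : (0:ℝ) < ((2:ℝ) ^ (2⁻¹:ℝ)) ^ k := by positivity
  rw [Real.mul_rpow hε.le (by positivity), Real.inv_rpow h2k.le,
    Real.rpow_neg h2k.le, inv_inv, pow_rpow_comm, pow_succ,
    Real.rpow_neg (by norm_num : (0:ℝ) ≤ 2), inv_pow]
  have hε1 : ε ^ (2⁻¹:ℝ) = ε * ε ^ (-(2⁻¹:ℝ)) := by
    have h := Real.rpow_add hε 1 (-(2⁻¹:ℝ))
    rw [show (1:ℝ) + -2⁻¹ = 2⁻¹ by norm_num, Real.rpow_one] at h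
    exact h
  rw [hε1, show (2:ℝ)^k = ((2:ℝ) ^ (2⁻¹:ℝ)) ^ k * ((2:ℝ) ^ (2⁻¹:ℝ)) ^ k from hP.symm]
  have h0 : ((2:ℝ) ^ (2⁻¹:ℝ)) ^ k ≠ 0 := ne_of_gt hPpos
  field_simp

lemma log_pow_bound {q : ℝ} (hq : 1 < q) {s : ℝ} (hs : 1 ≤ s) :
    (1 + Real.log s) ^ q ≤ (1 + 2 * q) ^ q * s ^ (2⁻¹:ℝ) := by
  have hq0 : 0 < q := by linarith
  have hs0 : 0 < s := by linarith
  set r : ℝ := (2 * q)⁻¹ with hrdef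
  have hr : 0 < r := by positivity
  have hsr : (0:ℝ) < s ^ r := Real.rpow_pos_of_pos hs0 r
  have hlog : Real.log s ≤ 2 * q * s ^ r := by
    have h1 : Real.log (s ^ r) = r * Real.log s := Real.log_rpow hs0 r
    have h2 : Real.log (s ^ r) ≤ s ^ r := by
      have := Real.log_le_sub_one_of_pos hsr
      linarith
    have h3 : r * Real.log s ≤ s ^ r := by rw [← h1]; exact h2
    have hrq : 2 * q * r = 1 := by
      rw [hrdef, mul_inv_cancel₀ (by positivity)]
    nlinarith [h3, hq0]
  have hone : 1 ≤ s ^ r := by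
    calc (1:ℝ) = 1 ^ r := (Real.one_rpow r).symm
    _ ≤ s ^ r := Real.rpow_le_rpow zero_le_one hs hr.le
  have key : 1 + Real.log s ≤ (1 + 2 * q) * s ^ r := by nlinarith
  have hbase : 0 ≤ 1 + Real.log s := by
    have := Real.log_nonneg hs; linarith
  calc (1 + Real.log s) ^ q ≤ ((1 + 2 * q) * s ^ r) ^ q :=
        Real.rpow_le_rpow hbase key hq0.le
    _ = (1 + 2 * q) ^ q * (s ^ r) ^ q := Real.mul_rpow (by linarith) hsr.le
    _ = (1 + 2 * q) ^ q * s ^ (2⁻¹:ℝ) := by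
        rw [← Real.rpow_mul hs0.le, show r * q = 2⁻¹ by rw [hrdef]; field_simp]

lemma case1 {C q ε σ t y : ℝ} (hC : 0 < C) (hq0 : 0 < q) (hε0 : 0 < ε) (ht : ε ≤ t)
    (hy : |y| ≤ C * (ε / t) ^ (1 - σ)) :
    |y| ^ q ≤ C ^ q * ε ^ ((1 - σ) * q) * t ^ (-((1 - σ) * q)) := by
  have ht0 : 0 < t := lt_of_lt_of_le hε0 ht
  have hdiv : (0:ℝ) ≤ ε / t := by positivity
  calc |y| ^ q ≤ (C * (ε / t) ^ (1 - σ)) ^ q :=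
        Real.rpow_le_rpow (abs_nonneg y) hy hq0.le
    _ = C ^ q * ((ε / t) ^ (1 - σ)) ^ q := Real.mul_rpow hC.le (Real.rpow_nonneg hdiv _)
    _ = C ^ q * (ε / t) ^ ((1 - σ) * q) := by rw [← Real.rpow_mul hdiv]
    _ = C ^ q * ε ^ ((1 - σ) * q) * t ^ (-((1 - σ) * q)) := by
        rw [Real.div_rpow hε0.le ht0.le, Real.rpow_neg ht0.le, div_eq_mul_inv, mul_assoc]

lemma case2 {C q ε t y : ℝ} (hC : 0 < C) (hq : 1 < q) (hε0 : 0 < ε) (hε1 : ε < 1)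
    (ht0 : 0 < t) (htε : t < ε)
    (hy : |y| ≤ C * (1 + |Real.log t|)) :
    |y| ^ q ≤ C ^ q * (1 + 2 * q) ^ q * (1 + |Real.log ε|) ^ q * ε ^ (2⁻¹:ℝ)
      * t ^ (-(2⁻¹:ℝ)) := by
  have hq0 : 0 < q := by linarith
  have ht1 : t < 1 := lt_trans htε hε1
  have hlt : Real.log t < 0 := Real.log_neg ht0 ht1
  have hle : Real.log ε < 0 := Real.log_neg hε0 hε1
  have hs : 1 ≤ ε / t := (one_le_div ht0).2 htε.le
  have hlogdiv : Real.log (ε / t) = Real.log ε - Real.log t := Real.log_div hε0.ne' ht0.ne'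
  have hlognn : 0 ≤ Real.log (ε / t) := Real.log_nonneg hs
  have habs : 1 + |Real.log t| ≤ (1 + |Real.log ε|) * (1 + Real.log (ε / t)) := by
    rw [abs_of_neg hlt, abs_of_neg hle, hlogdiv]
    nlinarith [hlognn, hlogdiv]
  have hb1 : (0:ℝ) ≤ 1 + |Real.log t| := by positivity
  have hb2 : (0:ℝ) ≤ 1 + |Real.log ε| := by positivity
  have hb3 : (0:ℝ) ≤ 1 + Real.log (ε / t) := by linarith
  calc |y| ^ q ≤ (C * (1 + |Real.log t|)) ^ q :=
        Real.rpow_le_rpow (abs_nonneg y) hy hq0.le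
    _ = C ^ q * (1 + |Real.log t|) ^ q := Real.mul_rpow hC.le hb1
    _ ≤ C ^ q * ((1 + |Real.log ε|) * (1 + Real.log (ε / t))) ^ q := by
        have := Real.rpow_le_rpow hb1 habs hq0.le
        have hCq : (0:ℝ) ≤ C ^ q := Real.rpow_nonneg hC.le q
        exact mul_le_mul_of_nonneg_left this hCq
    _ = C ^ q * ((1 + |Real.log ε|) ^ q * (1 + Real.log (ε / t)) ^ q) := by
        rw [Real.mul_rpow hb2 hb3]
    _ ≤ C ^ q * ((1 + |Real.log ε|) ^ q * ((1 + 2 * q) ^ q * (ε / t) ^ (2⁻¹:ℝ))) := by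
        have := log_pow_bound hq hs
        have hCq : (0:ℝ) ≤ C ^ q := Real.rpow_nonneg hC.le q
        have h2 : (0:ℝ) ≤ (1 + |Real.log ε|) ^ q := Real.rpow_nonneg hb2 q
        exact mul_le_mul_of_nonneg_left (mul_le_mul_of_nonneg_left this h2) hCq
    _ = C ^ q * (1 + 2 * q) ^ q * (1 + |Real.log ε|) ^ q * ε ^ (2⁻¹:ℝ) * t ^ (-(2⁻¹:ℝ)) := by
        rw [Real.div_rpow hε0.le ht0.le, Real.rpow_neg ht0.le, div_eq_mul_inv]
        ring

set_option maxHeartbeats 1000000 in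
/-- For a bounded Lipschitz domain `Ω` (with the layer bound
`|{x ∈ Ω : δ(x) < t}| ≤ C₁ t`), any function `R` with `|R(x)| ≤ C (ε/δ(x))^{1-σ}` for
`δ(x) ≥ ε` and `|R(x)| ≤ C(1+|log δ(x)|)` for `δ(x) ≤ ε` satisfies
`‖R‖_{L^q(Ω)} ≤ C' ε^{1/q}(1+|log ε|)`, with `C'` depending on `q`, `σ`, `C`, `C₁`, `Ω`. -/
theorem stmt13 (d : ℕ) (Ω : Set (EuclideanSpace ℝ (Fin d)))
    (hΩ : Bornology.IsBounded Ω)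
    (C₁ : ℝ) (hC₁ : 0 < C₁)
    (hlayer : ∀ t : ℝ, 0 < t →
      (volume {x ∈ Ω | Metric.infDist x (frontier Ω) < t}).toReal ≤ C₁ * t)
    (C σ : ℝ) (hC : 0 < C) (hσ0 : 0 < σ) (hσ1 : σ < 1)
    (q : ℝ) (hq : 1 < q) (hq' : 1 < (1 - σ) * q) :
    ∃ C' > 0, ∀ ε : ℝ, 0 < ε → ε < 1 →
      ∀ R : EuclideanSpace ℝ (Fin d) → ℝ, Measurable R →
      (∀ x ∈ Ω, ε ≤ Metric.infDist x (frontier Ω) →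
        |R x| ≤ C * (ε / Metric.infDist x (frontier Ω)) ^ (1 - σ)) →
      (∀ x ∈ Ω, Metric.infDist x (frontier Ω) ≤ ε →
        |R x| ≤ C * (1 + |Real.log (Metric.infDist x (frontier Ω))|)) →
      (∫ x in Ω, |R x| ^ q) ^ (1 / q) ≤ C' * ε ^ (1 / q) * (1 + |Real.log ε|) := by
  have hq0 : (0:ℝ) < q := by linarith
  set α : ℝ := (1 - σ) * q with hαdef
  have hα : 1 < α := hq'
  set r₁ : ℝ := (2:ℝ) ^ (1 - α) with hr₁def
  set r₂ : ℝ := (2:ℝ) ^ (-(2⁻¹:ℝ)) with hr₂def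
  have hr₁0 : 0 ≤ r₁ := Real.rpow_nonneg (by norm_num) _
  have hr₂0 : 0 ≤ r₂ := Real.rpow_nonneg (by norm_num) _
  have hr₁1 : r₁ < 1 := Real.rpow_lt_one_of_one_lt_of_neg one_lt_two (by linarith)
  have hr₂1 : r₂ < 1 := Real.rpow_lt_one_of_one_lt_of_neg one_lt_two (by norm_num)
  set D₁ : ℝ := C ^ q * (2 * C₁) / (1 - r₁) with hD₁def
  set D₂ : ℝ := C ^ q * (1 + 2 * q) ^ q * ((2:ℝ) ^ (2⁻¹:ℝ) * C₁) / (1 - r₂) with hD₂def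
  have hCq : (0:ℝ) < C ^ q := Real.rpow_pos_of_pos hC q
  have h12q : (0:ℝ) < (1 + 2 * q) ^ q := Real.rpow_pos_of_pos (by linarith) q
  have hD₁ : 0 < D₁ := by
    apply div_pos (by positivity) (by linarith)
  have hD₂ : 0 < D₂ := by
    apply div_pos ?_ (by linarith)
    have : (0:ℝ) < (2:ℝ) ^ (2⁻¹:ℝ) := Real.rpow_pos_of_pos two_pos _
    positivity
  set D : ℝ := D₁ + D₂ with hDdef
  have hD : 0 < D := by linarith
  refine ⟨D ^ (1/q), Real.rpow_pos_of_pos hD _, ?_⟩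
  intro ε hε0 hε1 R hRmeas hyp1 hyp2
  set δ : EuclideanSpace ℝ (Fin d) → ℝ := fun x => Metric.infDist x (frontier Ω) with hδdef
  have hδmeas : Measurable δ := (Metric.continuous_infDist_pt _).measurable
  have hδnn : ∀ x, 0 ≤ δ x := fun x => Metric.infDist_nonneg
  set L : ℝ := |Real.log ε| with hLdef
  have hL0 : 0 ≤ L := abs_nonneg _
  set ν : Measure (EuclideanSpace ℝ (Fin d)) := volume.restrict Ω with hνdef
  -- the measure bound for ν
  have hbν : ∀ t : ℝ, 0 < t → ν {x | δ x < t} ≤ ENNReal.ofReal (C₁ * t) := by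
    intro t ht
    have hms : MeasurableSet {x | δ x < t} := hδmeas measurableSet_Iio
    rw [hνdef, Measure.restrict_apply hms]
    have hset : {x | δ x < t} ∩ Ω = {x ∈ Ω | δ x < t} := by
      ext x; simp [and_comm]
    rw [hset]
    have hfin : volume {x ∈ Ω | δ x < t} ≠ ⊤ :=
      ne_of_lt (lt_of_le_of_lt (measure_mono fun x hx => hx.1) hΩ.measure_lt_top)
    rw [← ENNReal.ofReal_toReal hfin]
    exact ENNReal.ofReal_le_ofReal (hlayer t ht)
  -- the majorant
  set Q' : ℝ := C ^ q * (1 + 2 * q) ^ q * (1 + L) ^ q * ε ^ (2⁻¹:ℝ) with hQ'def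
  set F : EuclideanSpace ℝ (Fin d) → ℝ := fun x =>
    if ε ≤ δ x then C ^ q * ε ^ α * δ x ^ (-α)
    else if 0 < δ x then Q' * δ x ^ (-(2⁻¹:ℝ)) else C ^ q with hFdef
  have hFmeas : Measurable fun x => ENNReal.ofReal (F x) := by
    apply Measurable.ennreal_ofReal
    apply Measurable.ite (hδmeas measurableSet_Ici)
    · exact (measurable_const.mul (hδmeas.pow measurable_const))
    · exact Measurable.ite (hδmeas measurableSet_Ioi)
        (measurable_const.mul (hδmeas.pow measurable_const)) measurable_const
  -- pointwise domination on Ω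
  have hF : ∀ x ∈ Ω, ENNReal.ofReal (|R x| ^ q) ≤ ENNReal.ofReal (F x) := by
    intro x hx
    apply ENNReal.ofReal_le_ofReal
    simp only [hFdef]
    by_cases h1 : ε ≤ δ x
    · rw [if_pos h1]
      exact case1 hC hq0 hε0 h1 (hyp1 x hx h1)
    · rw [if_neg h1]
      push_neg at h1
      by_cases h2 : 0 < δ x
      · rw [if_pos h2]
        have := case2 hC hq hε0 hε1 h2 h1 (hyp2 x hx h1.le)
        calc |R x| ^ q ≤ C ^ q * (1 + 2*q) ^ q * (1 + |Real.log ε|) ^ q * ε ^ (2⁻¹:ℝ)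
              * δ x ^ (-(2⁻¹:ℝ)) := this
          _ = Q' * δ x ^ (-(2⁻¹:ℝ)) := by rw [hQ'def, hLdef]
      · rw [if_neg h2]
        have hδ0 : Metric.infDist x (frontier Ω) = 0 := le_antisymm (not_lt.1 h2) (hδnn x)
        have hb := hyp2 x hx (by rw [hδ0]; exact hε0.le)
        rw [hδ0] at hb
        simp only [Real.log_zero, abs_zero, add_zero, mul_one] at hb
        exact Real.rpow_le_rpow (abs_nonneg _) hb hq0.le
  -- main lintegral bound
  have hεα : (0:ℝ) < ε ^ α := Real.rpow_pos_of_pos hε0 _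
  have hQ'0 : 0 ≤ Q' := by
    have h1L : (0:ℝ) ≤ (1 + L) ^ q := Real.rpow_nonneg (by linarith) q
    have hεh : (0:ℝ) ≤ ε ^ (2⁻¹:ℝ) := Real.rpow_nonneg hε0.le _
    positivity
  have key : ∫⁻ x in Ω, ENNReal.ofReal (|R x| ^ q) ≤
      ENNReal.ofReal (D * (ε * (1 + L) ^ q)) := by
    have step1 : ∫⁻ x in Ω, ENNReal.ofReal (|R x| ^ q) ≤ ∫⁻ x in Ω, ENNReal.ofReal (F x) :=
      setLIntegral_mono hFmeas hF
    refine step1.trans ?_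
    -- split
    have hS₁ : MeasurableSet {x | ε ≤ δ x} := hδmeas measurableSet_Ici
    rw [show ∫⁻ x in Ω, ENNReal.ofReal (F x) = ∫⁻ x, ENNReal.ofReal (F x) ∂ν from rfl,
      ← lintegral_add_compl (fun x => ENNReal.ofReal (F x)) hS₁]
    -- term 1
    have hT₁ : ∫⁻ x in {x | ε ≤ δ x}, ENNReal.ofReal (F x) ∂ν ≤
        ENNReal.ofReal (D₁ * ε) := by
      have hmono : ∫⁻ x in {x | ε ≤ δ x}, ENNReal.ofReal (F x) ∂ν ≤
          ∫⁻ x in {x | ε ≤ δ x}, ENNReal.ofReal (C ^ q * ε ^ α) *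
            ENNReal.ofReal (δ x ^ (-α)) ∂ν := by
        refine setLIntegral_mono ((hδmeas.pow measurable_const).ennreal_ofReal.const_mul _)
          fun x hx => ?_
        simp only [hFdef]
        rw [if_pos (show ε ≤ δ x from hx), ← ENNReal.ofReal_mul (by positivity)]
      refine hmono.trans ?_
      rw [lintegral_const_mul _ ((hδmeas.pow measurable_const).ennreal_ofReal)]
      have hlayer1 : ∫⁻ x in {x | ε ≤ δ x}, ENNReal.ofReal (δ x ^ (-α)) ∂ν ≤
          ENNReal.ofReal (2 * C₁ * ε ^ (1 - α) / (1 - r₁)) := by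
        refine layer_est ν δ C₁ hbν (fun k => ε * 2 ^ k) (fun k => ε * 2 ^ (k+1))
          (fun k => by positivity) α _ ?_ _ r₁ (by positivity) hr₁0 hr₁1
          (fun k => (ε * 2 ^ k) ^ (-α)) (fun k => Real.rpow_nonneg (by positivity) _)
          ?_ ?_
        · intro x hx
          simp only [Set.mem_iUnion, Set.mem_setOf_eq]
          exact cover_inner hε0 hx
        · intro k x h1 h2
          exact Real.rpow_le_rpow_of_nonpos (by positivity) h1 (by linarith)
        · intro k
          exact le_of_eq (hprod_inner hε0 k)
      calc ENNReal.ofReal (C ^ q * ε ^ α) * ∫⁻ x in {x | ε ≤ δ x}, ENNReal.ofReal (δ x ^ (-α)) ∂ν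
          ≤ ENNReal.ofReal (C ^ q * ε ^ α) * ENNReal.ofReal (2 * C₁ * ε ^ (1 - α) / (1 - r₁)) :=
            mul_le_mul_right hlayer1 _
        _ = ENNReal.ofReal (C ^ q * ε ^ α * (2 * C₁ * ε ^ (1 - α) / (1 - r₁))) :=
            (ENNReal.ofReal_mul (by positivity)).symm
        _ = ENNReal.ofReal (D₁ * ε) := by
            congr 1
            have hεsplit : ε ^ α * ε ^ (1 - α) = ε := by
              rw [← Real.rpow_add hε0, show α + (1 - α) = 1 by ring, Real.rpow_one]
            calc C ^ q * ε ^ α * (2 * C₁ * ε ^ (1 - α) / (1 - r₁))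
                = C ^ q * (2 * C₁) / (1 - r₁) * (ε ^ α * ε ^ (1 - α)) := by ring
              _ = D₁ * ε := by rw [hεsplit, hD₁def]
    -- term 2 + 3
    have hT₂₃ : ∫⁻ x in {x | ε ≤ δ x}ᶜ, ENNReal.ofReal (F x) ∂ν ≤
        ENNReal.ofReal (D₂ * ((1 + L) ^ q * ε)) := by
      have hsub : {x | ε ≤ δ x}ᶜ ⊆ ({x | ε ≤ δ x}ᶜ ∩ {x | 0 < δ x}) ∪ {x | δ x ≤ 0} := by
        intro x hx
        by_cases h : 0 < δ x
        · exact Or.inl ⟨hx, h⟩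
        · exact Or.inr (not_lt.1 h)
      refine (lintegral_mono_set hsub).trans ((lintegral_union_le _ _ _).trans ?_)
      have hzero : ν {x | δ x ≤ 0} = 0 := by
        refine le_antisymm ?_ zero_le
        refine ENNReal.le_of_forall_pos_le_add fun η hη _ => ?_
        rw [zero_add]
        have hη' : (0:ℝ) < (η:ℝ) := hη
        calc ν {x | δ x ≤ 0} ≤ ν {x | δ x < (η:ℝ) / (2 * C₁)} := by
              refine measure_mono fun x hx => ?_
              simp only [Set.mem_setOf_eq] at *
              have : (0:ℝ) < (η:ℝ) / (2 * C₁) := by positivity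
              linarith
          _ ≤ ENNReal.ofReal (C₁ * ((η:ℝ) / (2 * C₁))) := hbν _ (by positivity)
          _ ≤ (η : ℝ≥0∞) := by
              rw [show C₁ * ((η:ℝ) / (2 * C₁)) = (η:ℝ) / 2 by field_simp]
              calc ENNReal.ofReal ((η:ℝ) / 2) ≤ ENNReal.ofReal (η:ℝ) :=
                    ENNReal.ofReal_le_ofReal (by linarith)
                _ = (η : ℝ≥0∞) := ENNReal.ofReal_coe_nnreal
      rw [setLIntegral_measure_zero _ _ hzero, add_zero]
      -- term 2
      have hmono : ∫⁻ x in {x | ε ≤ δ x}ᶜ ∩ {x | 0 < δ x}, ENNReal.ofReal (F x) ∂ν ≤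
          ∫⁻ x in {x | ε ≤ δ x}ᶜ ∩ {x | 0 < δ x}, ENNReal.ofReal Q' *
            ENNReal.ofReal (δ x ^ (-(2⁻¹:ℝ))) ∂ν := by
        refine setLIntegral_mono ((hδmeas.pow measurable_const).ennreal_ofReal.const_mul _)
          fun x hx => ?_
        have hx1 : ¬ ε ≤ δ x := hx.1
        simp only [hFdef]
        rw [if_neg hx1, if_pos (show 0 < δ x from hx.2), ← ENNReal.ofReal_mul hQ'0]
      refine hmono.trans ?_
      rw [lintegral_const_mul _ ((hδmeas.pow measurable_const).ennreal_ofReal)]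
      have hlayer2 : ∫⁻ x in {x | ε ≤ δ x}ᶜ ∩ {x | 0 < δ x},
          ENNReal.ofReal (δ x ^ (-(2⁻¹:ℝ))) ∂ν ≤
          ENNReal.ofReal ((2:ℝ) ^ (2⁻¹:ℝ) * C₁ * ε ^ (2⁻¹:ℝ) / (1 - r₂)) := by
        refine layer_est ν δ C₁ hbν (fun k => ε * ((2:ℝ) ^ (k+1))⁻¹)
          (fun k => ε * ((2:ℝ) ^ k)⁻¹) (fun k => by positivity) (2⁻¹:ℝ) _ ?_
          _ r₂ (by positivity) hr₂0 hr₂1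
          (fun k => (ε * ((2:ℝ) ^ (k+1))⁻¹) ^ (-(2⁻¹:ℝ)))
          (fun k => Real.rpow_nonneg (by positivity) _) ?_ ?_
        · intro x hx
          simp only [Set.mem_iUnion, Set.mem_setOf_eq]
          have hx1 : δ x < ε := not_le.1 hx.1
          exact cover_outer hε0 hx.2 hx1
        · intro k x h1 h2
          exact Real.rpow_le_rpow_of_nonpos (by positivity) h1 (by norm_num)
        · intro k
          exact le_of_eq (hprod_outer hε0 k)
      calc ENNReal.ofReal Q' * ∫⁻ x in {x | ε ≤ δ x}ᶜ ∩ {x | 0 < δ x},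
            ENNReal.ofReal (δ x ^ (-(2⁻¹:ℝ))) ∂ν
          ≤ ENNReal.ofReal Q' *
            ENNReal.ofReal ((2:ℝ) ^ (2⁻¹:ℝ) * C₁ * ε ^ (2⁻¹:ℝ) / (1 - r₂)) :=
            mul_le_mul_right hlayer2 _
        _ = ENNReal.ofReal (Q' * ((2:ℝ) ^ (2⁻¹:ℝ) * C₁ * ε ^ (2⁻¹:ℝ) / (1 - r₂))) :=
            (ENNReal.ofReal_mul hQ'0).symm
        _ = ENNReal.ofReal (D₂ * ((1 + L) ^ q * ε)) := by
            congr 1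
            have hεsplit : ε ^ (2⁻¹:ℝ) * ε ^ (2⁻¹:ℝ) = ε := by
              rw [← Real.rpow_add hε0, show (2⁻¹:ℝ) + 2⁻¹ = 1 by norm_num, Real.rpow_one]
            calc Q' * ((2:ℝ) ^ (2⁻¹:ℝ) * C₁ * ε ^ (2⁻¹:ℝ) / (1 - r₂))
                = C ^ q * (1 + 2 * q) ^ q * ((2:ℝ) ^ (2⁻¹:ℝ) * C₁) / (1 - r₂) *
                  ((1 + L) ^ q * (ε ^ (2⁻¹:ℝ) * ε ^ (2⁻¹:ℝ))) := by rw [hQ'def]; ring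
              _ = D₂ * ((1 + L) ^ q * ε) := by rw [hεsplit, hD₂def]
    refine (add_le_add hT₁ hT₂₃).trans ?_
    rw [← ENNReal.ofReal_add (by positivity) ?h2]
    case h2 =>
      have h1L : (0:ℝ) ≤ (1 + L) ^ q := Real.rpow_nonneg (by linarith) q
      positivity
    apply ENNReal.ofReal_le_ofReal
    have hone : 1 ≤ (1 + L) ^ q := Real.one_le_rpow (by linarith) hq0.le
    have hc : (0:ℝ) ≤ D₁ * ε := by positivity
    have h1 : D₁ * ε * 1 ≤ D₁ * ε * ((1 + L) ^ q) := mul_le_mul_of_nonneg_left hone hc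
    rw [hDdef]; nlinarith [h1]
  -- from lintegral to integral
  have hnn : 0 ≤ᵐ[ν] fun x => |R x| ^ q :=
    Filter.Eventually.of_forall fun x => Real.rpow_nonneg (abs_nonneg _) q
  have hmeasRq : AEStronglyMeasurable (fun x => |R x| ^ q) ν :=
    (hRmeas.abs.pow measurable_const).aestronglyMeasurable
  have hBnn : (0:ℝ) ≤ D * (ε * (1 + L) ^ q) := by
    have h1L : (0:ℝ) ≤ (1 + L) ^ q := Real.rpow_nonneg (by linarith) q
    positivity
  have hIle : ∫ x in Ω, |R x| ^ q ≤ D * (ε * (1 + L) ^ q) := by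
    rw [integral_eq_lintegral_of_nonneg_ae hnn hmeasRq]
    calc (∫⁻ x in Ω, ENNReal.ofReal (|R x| ^ q)).toReal
        ≤ (ENNReal.ofReal (D * (ε * (1 + L) ^ q))).toReal :=
          ENNReal.toReal_mono ENNReal.ofReal_ne_top key
      _ = D * (ε * (1 + L) ^ q) := ENNReal.toReal_ofReal hBnn
  have hInn : 0 ≤ ∫ x in Ω, |R x| ^ q :=
    integral_nonneg fun x => Real.rpow_nonneg (abs_nonneg _) q
  calc (∫ x in Ω, |R x| ^ q) ^ (1/q)
      ≤ (D * (ε * (1 + L) ^ q)) ^ (1/q) := Real.rpow_le_rpow hInn hIle (by positivity)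
    _ = D ^ (1/q) * ε ^ (1/q) * (1 + L) := by
        have h1L : (0:ℝ) ≤ 1 + L := by linarith
        have h1Lq : (0:ℝ) ≤ (1 + L) ^ q := Real.rpow_nonneg h1L q
        rw [Real.mul_rpow hD.le (by positivity), Real.mul_rpow hε0.le h1Lq,
          ← Real.rpow_mul h1L, mul_one_div_cancel hq0.ne', Real.rpow_one, mul_assoc]
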